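/- (No policy exceeds the best steady state, noiseless case) Let k ≥ 1 and let A be a finite action set with parameter vectors γ(a) = (γ_0(a),...,γ_k(a)) satisfying γ_i(a) ≥ 0 for all i ∈ {0,...,k} and Σ_{i=1}^k γ_i(a) < 1 for every a. Define x* = max_{a ∈ A} γ_0(a)/(1 − Σ_{i=1}^k γ_i(a)). Let (a_t)_{t≥1} be any action sequence and define x_t = γ_0(a_t) + Σ_{i=1}^k γ_i(a_t) x_{t-i}, where the initial values satisfy x_s ≤ x* for all s ≤ 0. Then x_t ≤ x* for every t ≥ 1. -/

import Mathlib

/-!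
STATEMENT 16 (No policy exceeds the best steady state, noiseless case): with
nonnegative parameters and `∑_{i=1}^k γ_i(a) < 1` for every action, let
`x* = max_a γ_0(a)/(1 − ∑_{i=1}^k γ_i(a))` be the best steady-state reward.
Then any noiseless trajectory whose initial values satisfy `x_s ≤ x*` for `s ≤ 0`
satisfies `x_t ≤ x*` for every `t ≥ 1`.
-/
theorem no_policy_exceeds_best_steady_state
    (n k : ℕ) (hn : 1 ≤ n) (hk : 1 ≤ k)
    (γ : Fin n → ℕ → ℝ)
    (hγ : ∀ (a : Fin n) (i : ℕ), i ≤ k → 0 ≤ γ a i)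
    (hstab : ∀ a : Fin n, ∑ i ∈ Finset.Icc 1 k, γ a i < 1)
    (xstar : ℝ)
    (hmax : ∀ a : Fin n, γ a 0 / (1 - ∑ i ∈ Finset.Icc 1 k, γ a i) ≤ xstar)
    (hattain : ∃ a : Fin n, xstar = γ a 0 / (1 - ∑ i ∈ Finset.Icc 1 k, γ a i))
    (a : ℤ → Fin n) (x : ℤ → ℝ)
    (hinit : ∀ s : ℤ, s ≤ 0 → x s ≤ xstar)
    (hrec : ∀ t : ℤ, 1 ≤ t →
      x t = γ (a t) 0 + ∑ i ∈ Finset.Icc 1 k, γ (a t) i * x (t - i)) :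
    ∀ t : ℤ, 1 ≤ t → x t ≤ xstar := by
  have key : ∀ m : ℕ, ∀ t : ℤ, t ≤ (m : ℤ) → x t ≤ xstar := by
    intro m
    induction m with
    | zero => intro t ht; exact hinit t (by exact_mod_cast ht)
    | succ m ih =>
      intro t ht
      rcases le_or_gt t (m : ℤ) with h | h
      · exact ih t h
      · have ht1 : 1 ≤ t := by omega
        have hteq : x t = γ (a t) 0 + ∑ i ∈ Finset.Icc 1 k, γ (a t) i * x (t - i) :=
          hrec t ht1
        set S := ∑ i ∈ Finset.Icc 1 k, γ (a t) i with hS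
        have hSlt : S < 1 := hstab (a t)
        have hSpos : 0 < 1 - S := by linarith
        have h1 : ∑ i ∈ Finset.Icc 1 k, γ (a t) i * x (t - i)
            ≤ ∑ i ∈ Finset.Icc 1 k, γ (a t) i * xstar := by
          apply Finset.sum_le_sum
          intro i hi
          simp only [Finset.mem_Icc] at hi
          have hxi : x (t - i) ≤ xstar := by
            apply ih
            omega
          exact mul_le_mul_of_nonneg_left hxi (hγ (a t) i hi.2)
        have h2 : γ (a t) 0 ≤ (1 - S) * xstar := by
          have := hmax (a t)
          rw [div_le_iff₀ hSpos] at this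
          linarith [this]
        calc x t ≤ γ (a t) 0 + S * xstar := by
              rw [hteq, hS, ← Finset.sum_mul] at *; linarith
          _ ≤ (1 - S) * xstar + S * xstar := by linarith
          _ = xstar := by ring
  intro t ht
  exact key t.toNat t (by omega)
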